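/- Let (E, ℰ) be a measurable space, ν a probability measure on E, and P a Markov kernel on E leaving ν invariant (i.e. ∫ P f dν = ∫ f dν for bounded measurable f ≥ 0, extended to nonnegative measurable f by monotone convergence). Let V : E → [0,∞) be measurable, λ > 0, and suppose there are constants r ∈ (0,1), p > 1 with p·r < 1, and C ≥ 0 such that for every x ∈ E, ∫_E exp(λ V(y)) P(x, dy) ≤ (1/p) exp(λ p r V(x)) + C. Then ∫_E exp(λ V(x)) ν(dx) ≤ p C / (p − 1) < ∞. -/

import Mathlib

open MeasureTheory ProbabilityTheory ENNReal

lemma aux_jensen_rpow {α : Type*} [MeasurableSpace α] (μ : Measure α) [IsProbabilityMeasure μ]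
    {g : α → ℝ≥0∞} (hg : Measurable g) {s : ℝ} (hs : 0 < s) (hs1 : s < 1) :
    ∫⁻ a, g a ^ s ∂μ ≤ (∫⁻ a, g a ∂μ) ^ s := by
  have hconj : (1/s).HolderConjugate ((1/s)/((1/s) - 1)) :=
    Real.HolderConjugate.conjExponent (by rw [lt_div_iff₀ hs]; linarith)
  have h := ENNReal.lintegral_mul_le_Lp_mul_Lq μ hconj
    (f := fun a => g a ^ s) (g := fun _ => 1)
    ((hg.pow measurable_const)).aemeasurable aemeasurable_const
  simp only [Pi.mul_apply, mul_one, one_div] at h ⊢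
  calc ∫⁻ a, g a ^ s ∂μ ≤ (∫⁻ a, (g a ^ s) ^ s⁻¹ ∂μ) ^ s⁻¹⁻¹ *
      (∫⁻ a, (1:ℝ≥0∞) ^ (s⁻¹/(s⁻¹-1)) ∂μ) ^ (s⁻¹/(s⁻¹-1))⁻¹ := by
        simpa using h
    _ = (∫⁻ a, g a ∂μ) ^ s := by
        have : ∀ a : α, (g a ^ s) ^ s⁻¹ = g a := by
          intro a
          rw [← ENNReal.rpow_mul, mul_inv_cancel₀ hs.ne', ENNReal.rpow_one]
        simp only [this, ENNReal.one_rpow, lintegral_const, measure_univ, mul_one,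
          ENNReal.one_rpow, inv_inv]

section aux
variable {s : ℝ} (c K : ℝ≥0∞)

/-- the drift map -/
noncomputable def auxF (c K : ℝ≥0∞) (s : ℝ) : ℝ≥0∞ → ℝ≥0∞ := fun t => c * t ^ s + K

lemma auxF_mono (hs : 0 ≤ s) : Monotone (auxF c K s) := fun a b hab => by
  exact add_le_add_left (mul_le_mul_right (ENNReal.rpow_le_rpow hab hs) c) K

lemma auxF_meas : Measurable (auxF c K s) :=
  ((measurable_id.pow measurable_const).const_mul c).add_const K

lemma auxF_iter_meas (n : ℕ) : Measurable ((auxF c K s)^[n]) := by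
  induction n with
  | zero => simpa using measurable_id
  | succ n ih => rw [Function.iterate_succ]; exact ih.comp (auxF_meas c K)

lemma rpow_le_add_one (t : ℝ≥0∞) (hs : 0 ≤ s) (hs1 : s ≤ 1) : t ^ s ≤ t + 1 := by
  rcases le_total t 1 with h | h
  · calc t ^ s ≤ 1 ^ s := ENNReal.rpow_le_rpow h hs
      _ = 1 := ENNReal.one_rpow s
      _ ≤ t + 1 := le_add_self
  · calc t ^ s ≤ t ^ (1:ℝ) := ENNReal.rpow_le_rpow_of_exponent_le h hs1
      _ = t := ENNReal.rpow_one t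
      _ ≤ t + 1 := le_self_add

lemma auxF_le (hs : 0 ≤ s) (hs1 : s ≤ 1) (t : ℝ≥0∞) :
    auxF c K s t ≤ c * t + (c + K) := by
  unfold auxF
  calc c * t ^ s + K ≤ c * (t + 1) + K := by gcongr; exact rpow_le_add_one t hs hs1
    _ = c * t + (c + K) := by ring

lemma auxF_iter_le (hs : 0 ≤ s) (hs1 : s ≤ 1) {B : ℝ≥0∞} (hB : c * B + (c + K) ≤ B)
    (t : ℝ≥0∞) (n : ℕ) : (auxF c K s)^[n] t ≤ c ^ n * t + B := by
  induction n with
  | zero =>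
    simp only [Function.iterate_zero, id_eq, pow_zero, one_mul]
    exact le_add_right le_rfl
  | succ n ih =>
    rw [Function.iterate_succ_apply']
    calc auxF c K s ((auxF c K s)^[n] t) ≤ c * ((auxF c K s)^[n] t) + (c + K) :=
          auxF_le c K hs hs1 _
      _ ≤ c * (c ^ n * t + B) + (c + K) := by gcongr
      _ = c ^ (n+1) * t + (c * B + (c + K)) := by ring
      _ ≤ c ^ (n+1) * t + B := by gcongr

lemma auxF_jensen {α : Type*} [MeasurableSpace α] (μ : Measure α) [IsProbabilityMeasure μ]
    {g : α → ℝ≥0∞} (hg : Measurable g) (hs : 0 < s) (hs1 : s < 1) :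
    ∫⁻ a, auxF c K s (g a) ∂μ ≤ auxF c K s (∫⁻ a, g a ∂μ) := by
  unfold auxF
  rw [lintegral_add_right _ measurable_const, lintegral_const_mul c (hg.pow measurable_const),
    lintegral_const, measure_univ, mul_one]
  gcongr
  exact aux_jensen_rpow μ hg hs hs1

lemma auxF_iter_jensen {α : Type*} [MeasurableSpace α] (μ : Measure α) [IsProbabilityMeasure μ]
    {g : α → ℝ≥0∞} (hg : Measurable g) (hs : 0 < s) (hs1 : s < 1) (n : ℕ) :
    ∫⁻ a, (auxF c K s)^[n] (g a) ∂μ ≤ (auxF c K s)^[n] (∫⁻ a, g a ∂μ) := by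
  induction n generalizing g with
  | zero => simp
  | succ n ih =>
    simp only [Function.iterate_succ_apply]
    calc ∫⁻ a, (auxF c K s)^[n] (auxF c K s (g a)) ∂μ
        ≤ (auxF c K s)^[n] (∫⁻ a, auxF c K s (g a) ∂μ) :=
          ih ((auxF_meas c K).comp hg)
      _ ≤ (auxF c K s)^[n] (auxF c K s (∫⁻ a, g a ∂μ)) :=
          (auxF_mono c K hs.le).iterate n (auxF_jensen c K μ hg hs hs1)

end aux


theorem stmt12 {E : Type*} [MeasurableSpace E] (ν : Measure E) [IsProbabilityMeasure ν]
    (P : Kernel E E) [IsMarkovKernel P]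
    (hinv : ∀ f : E → ℝ≥0∞, Measurable f →
      ∫⁻ x, ∫⁻ y, f y ∂(P x) ∂ν = ∫⁻ x, f x ∂ν)
    (V : E → ℝ) (hV : Measurable V) (hV0 : ∀ x, 0 ≤ V x)
    (l r p C : ℝ) (hl : 0 < l) (hr : r ∈ Set.Ioo (0:ℝ) 1) (hp : 1 < p)
    (hpr : p * r < 1) (hC : 0 ≤ C)
    (hdrift : ∀ x, ∫⁻ y, ENNReal.ofReal (Real.exp (l * V y)) ∂(P x) ≤
      ENNReal.ofReal ((1/p) * Real.exp (l * p * r * V x) + C)) :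
    ∫⁻ x, ENNReal.ofReal (Real.exp (l * V x)) ∂ν ≤ ENNReal.ofReal (p * C / (p - 1)) ∧
    ∫⁻ x, ENNReal.ofReal (Real.exp (l * V x)) ∂ν < ⊤ := by
  set W : E → ℝ≥0∞ := fun x => ENNReal.ofReal (Real.exp (l * V x)) with hWdef
  have hWmeas : Measurable W := (Real.measurable_exp.comp (hV.const_mul l)).ennreal_ofReal
  have hW1 : ∀ x, 1 ≤ W x := fun x =>
    ENNReal.one_le_ofReal.mpr (Real.one_le_exp (mul_nonneg hl.le (hV0 x)))
  have hWne : ∀ x, W x ≠ ⊤ := fun x => ENNReal.ofReal_ne_top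
  set s : ℝ := p * r with hsdef
  have hp0 : (0:ℝ) < p := lt_trans one_pos hp
  have hs : 0 < s := mul_pos hp0 hr.1
  have hs1 : s < 1 := hpr
  set c : ℝ≥0∞ := ENNReal.ofReal (1/p) with hcdef
  set K : ℝ≥0∞ := ENNReal.ofReal C with hKdef
  have hc1 : c < 1 := by
    rw [hcdef, ← ENNReal.ofReal_one]
    exact ENNReal.ofReal_lt_ofReal_iff_of_nonneg (by positivity) |>.mpr
      (by rw [div_lt_one hp0]; linarith)
  -- drift in ℝ≥0∞ form
  have hdrift' : ∀ x, ∫⁻ y, W y ∂(P x) ≤ auxF c K s (W x) := by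
    intro x
    refine le_trans (hdrift x) (le_of_eq ?_)
    have h1 : Real.exp (l * p * r * V x) = Real.exp (l * V x) ^ s := by
      rw [show l * p * r * V x = (l * V x) * s by rw [hsdef]; ring, Real.exp_mul]
    rw [ENNReal.ofReal_add (by positivity) hC, h1,
      ENNReal.ofReal_mul (by positivity)]
    have h2 : ENNReal.ofReal (Real.exp (l * V x) ^ s) = W x ^ s :=
      (ENNReal.ofReal_rpow_of_pos (Real.exp_pos _)).symm ▸ rfl
    rw [h2]
    rfl
  set B : ℝ≥0∞ := ENNReal.ofReal ((1 + p * C) / (p - 1)) with hBdef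
  have hp1 : (0:ℝ) < p - 1 := by linarith
  have hB : c * B + (c + K) ≤ B := by
    have hBnn : (0:ℝ) ≤ (1 + p * C) / (p - 1) := div_nonneg (by positivity) hp1.le
    rw [hcdef, hKdef, hBdef, ← ENNReal.ofReal_mul (by positivity),
      ← ENNReal.ofReal_add (by positivity) hC,
      ← ENNReal.ofReal_add (mul_nonneg (by positivity) hBnn) (by positivity)]
    refine ENNReal.ofReal_le_ofReal (le_of_eq ?_)
    field_simp
    ring
  -- key induction
  have key : ∀ (N : ℕ) (n : ℕ),
      ∫⁻ x, min (W x) N ∂ν ≤ ∫⁻ x, min ((auxF c K s)^[n] (W x)) N ∂ν := by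
    intro N n
    induction n with
    | zero => simp
    | succ n ih =>
      refine le_trans ih ?_
      have hmeas : Measurable fun x => min ((auxF c K s)^[n] (W x)) (N : ℝ≥0∞) :=
        ((auxF_iter_meas c K n).comp hWmeas).min measurable_const
      rw [← hinv _ hmeas]
      refine lintegral_mono fun x => ?_
      refine le_min ?_ ?_
      · calc ∫⁻ y, min ((auxF c K s)^[n] (W y)) (N:ℝ≥0∞) ∂(P x)
            ≤ ∫⁻ y, (auxF c K s)^[n] (W y) ∂(P x) :=
              lintegral_mono fun y => min_le_left _ _
          _ ≤ (auxF c K s)^[n] (∫⁻ y, W y ∂(P x)) :=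
              auxF_iter_jensen c K (P x) hWmeas hs hs1 n
          _ ≤ (auxF c K s)^[n] (auxF c K s (W x)) :=
              (auxF_mono c K hs.le).iterate n (hdrift' x)
          _ = (auxF c K s)^[n+1] (W x) := (Function.iterate_succ_apply _ _ _).symm
          _ ≤ min ((auxF c K s)^[n+1] (W x)) (N:ℝ≥0∞) ⊔ (auxF c K s)^[n+1] (W x) :=
              le_max_right _ _
          _ = (auxF c K s)^[n+1] (W x) := by simp [min_le_left]
      · calc ∫⁻ y, min ((auxF c K s)^[n] (W y)) (N:ℝ≥0∞) ∂(P x)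
            ≤ ∫⁻ y, (N:ℝ≥0∞) ∂(P x) := lintegral_mono fun y => min_le_right _ _
          _ = N := by simp
  -- uniform bound
  have bound : ∀ (N : ℕ) (n : ℕ),
      ∫⁻ x, min ((auxF c K s)^[n] (W x)) N ∂ν ≤
        (∫⁻ x, min (c ^ n * W x) N ∂ν) + B := by
    intro N n
    have hpt : ∀ x, min ((auxF c K s)^[n] (W x)) (N:ℝ≥0∞) ≤
        min (c ^ n * W x) N + B := by
      intro x
      have h1 : (auxF c K s)^[n] (W x) ≤ c ^ n * W x + B :=
        auxF_iter_le c K hs.le hs1.le hB (W x) n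
      rcases le_total (c ^ n * W x) (N:ℝ≥0∞) with h | h
      · rw [min_eq_left h]
        exact le_trans (min_le_left _ _) h1
      · rw [min_eq_right h]
        exact le_trans (min_le_right _ _) (le_add_right le_rfl)
    calc ∫⁻ x, min ((auxF c K s)^[n] (W x)) (N:ℝ≥0∞) ∂ν
        ≤ ∫⁻ x, (min (c ^ n * W x) N + B) ∂ν := lintegral_mono hpt
      _ = (∫⁻ x, min (c ^ n * W x) N ∂ν) + B := by
          rw [lintegral_add_right _ measurable_const, lintegral_const, measure_univ, mul_one]
  -- the truncated integrals tend to 0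
  have tend : ∀ N : ℕ, Filter.Tendsto (fun n => ∫⁻ x, min (c ^ n * W x) N ∂ν)
      Filter.atTop (nhds 0) := by
    intro N
    have := tendsto_lintegral_of_dominated_convergence (μ := ν)
      (F := fun n x => min (c ^ n * W x) N) (f := fun _ => 0) (bound := fun _ => (N:ℝ≥0∞))
      (fun n => ((hWmeas.const_mul _)).min measurable_const)
      (fun n => Filter.Eventually.of_forall fun x => min_le_right _ _)
      (by simp)
      (Filter.Eventually.of_forall fun x => ?_)
    · simpa using this
    · have hc : Filter.Tendsto (fun n : ℕ => c ^ n * W x) Filter.atTop (nhds 0) := by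
        have := ENNReal.Tendsto.mul_const
          (ENNReal.tendsto_pow_atTop_nhds_zero_of_lt_one hc1) (Or.inr (hWne x))
        simpa using this
      exact tendsto_of_tendsto_of_tendsto_of_le_of_le tendsto_const_nhds hc
        (fun n => zero_le) (fun n => min_le_left _ _)
  -- every truncation is bounded by B
  have trunc_le : ∀ N : ℕ, ∫⁻ x, min (W x) N ∂ν ≤ B := by
    intro N
    have h : Filter.Tendsto (fun n => (∫⁻ x, min (c ^ n * W x) N ∂ν) + B)
        Filter.atTop (nhds B) := by
      have := (tend N).add_const B
      simpa using this
    exact ge_of_tendsto' h fun n => le_trans (key N n) (bound N n)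
  -- hence the integral is finite
  have hsup : ∀ x, ⨆ N : ℕ, min (W x) N = W x := by
    intro x
    refine le_antisymm (iSup_le fun N => min_le_left _ _) ?_
    obtain ⟨n, hn⟩ := ENNReal.exists_nat_gt (hWne x)
    exact le_trans (le_of_eq (min_eq_left hn.le).symm) (le_iSup (fun N : ℕ => min (W x) N) n)
  have hIB : ∫⁻ x, W x ∂ν ≤ B := by
    have hmono : Monotone fun N : ℕ => fun x => min (W x) N := by
      intro a b hab x
      exact min_le_min le_rfl (by exact_mod_cast Nat.cast_le.mpr hab)
    calc ∫⁻ x, W x ∂ν = ∫⁻ x, ⨆ N : ℕ, min (W x) N ∂ν := by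
          simp_rw [hsup]
      _ = ⨆ N : ℕ, ∫⁻ x, min (W x) N ∂ν :=
          lintegral_iSup (fun N => hWmeas.min measurable_const) hmono
      _ ≤ B := iSup_le trunc_le
  have htop : ∫⁻ x, W x ∂ν < ⊤ := lt_of_le_of_lt hIB ENNReal.ofReal_lt_top
  -- final inequality
  have hfin : ∫⁻ x, W x ∂ν ≤ c * ∫⁻ x, W x ∂ν + K := by
    calc ∫⁻ x, W x ∂ν = ∫⁻ x, ∫⁻ y, W y ∂(P x) ∂ν := (hinv W hWmeas).symm
      _ ≤ ∫⁻ x, auxF c K s (W x) ∂ν := lintegral_mono fun x => hdrift' x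
      _ = c * (∫⁻ x, W x ^ s ∂ν) + K := by
          unfold auxF
          rw [lintegral_add_right _ measurable_const,
            lintegral_const_mul c (hWmeas.pow measurable_const),
            lintegral_const, measure_univ, mul_one]
      _ ≤ c * ∫⁻ x, W x ∂ν + K := by
          gcongr with x
          calc W x ^ s ≤ W x ^ (1:ℝ) :=
              ENNReal.rpow_le_rpow_of_exponent_le (hW1 x) hs1.le
            _ = W x := ENNReal.rpow_one _
  set I : ℝ≥0∞ := ∫⁻ x, W x ∂ν with hIdef
  have hIne : I ≠ ⊤ := htop.ne
  have hreal : I.toReal ≤ (1/p) * I.toReal + C := by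
    have hrhs : (c * I + K).toReal = (1/p) * I.toReal + C := by
      rw [ENNReal.toReal_add (by finiteness) (by finiteness), ENNReal.toReal_mul,
        hcdef, hKdef, ENNReal.toReal_ofReal (by positivity), ENNReal.toReal_ofReal hC]
    have := ENNReal.toReal_mono (by finiteness) hfin
    rwa [hrhs] at this
  have hi0 : 0 ≤ I.toReal := ENNReal.toReal_nonneg
  have hfinal : I.toReal ≤ p * C / (p - 1) := by
    rw [le_div_iff₀ hp1]
    have h2 : p * I.toReal ≤ I.toReal + p * C := by
      have := mul_le_mul_of_nonneg_left hreal (le_of_lt hp0)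
      calc p * I.toReal ≤ p * ((1/p) * I.toReal + C) := this
        _ = I.toReal + p * C := by field_simp
    nlinarith
  constructor
  · calc I = ENNReal.ofReal I.toReal := (ENNReal.ofReal_toReal hIne).symm
      _ ≤ ENNReal.ofReal (p * C / (p - 1)) := ENNReal.ofReal_le_ofReal hfinal
  · exact htop
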